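/- Fix integers n, k with 1 ≤ k < n. Let x and y be two independent uniformly random binary strings of length n (all symbols i.i.d. Bernoulli(1/2)). For any positions a, b, c, d in {1,…,n−k+1} with a < b and d − c ≠ b − a, Pr( x(a) = y(c) and x(b) = y(d) ) ≤ 2^{−2k}. (Lemma 4 of the paper: the bound holds even when x(a) overlaps x(b) and y(c) overlaps y(d).) -/

import Mathlib

/-- The symbol of `x` at (0-indexed) position `t`, with junk value `false` out of range. -/
def get {n : ℕ} (x : Fin n → Bool) (t : ℕ) : Bool :=
  if h : t < n then x ⟨t, h⟩ else false

/-- The `k`-mer of `x` starting at (0-indexed) position `a`. -/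
def kmer {n : ℕ} (k : ℕ) (x : Fin n → Bool) (a : ℕ) : Fin k → Bool :=
  fun t => get x (a + t.val)

/-- Probability of an event under the uniform distribution on a finite sample space. -/
noncomputable def prob {Ω : Type*} [Fintype Ω] (p : Ω → Prop) : ℝ :=
  (Nat.card {ω // p ω} : ℝ) / (Fintype.card Ω : ℝ)

/-- Lemma 4: for two independent uniformly random binary strings `x`, `y` of length `n`
and positions `a < b`, `c`, `d` with `d - c ≠ b - a` (as integers), the probability
that `x(a) = y(c)` and `x(b) = y(d)` is at most `2^{-2k}`, even in the presence of
overlaps between `x(a)` and `x(b)` and between `y(c)` and `y(d)`. -/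
lemma get_pos {n : ℕ} (x : Fin n → Bool) (t : ℕ) (h : t < n) : get x t = x ⟨t, h⟩ :=
  dif_pos h

lemma get_neg {n : ℕ} (x : Fin n → Bool) (t : ℕ) (h : ¬ t < n) : get x t = false :=
  dif_neg h

lemma count_fixed {n : ℕ} (S : Finset (Fin n)) :
    (Finset.univ.filter fun f : Fin n → Bool => ∀ i ∈ S, f i = false).card
      = 2 ^ (n - S.card) := by
  classical
  have h1 : (Finset.univ.filter fun f : Fin n → Bool => ∀ i ∈ S, f i = false)
      = Fintype.piFinset (fun i => if i ∈ S then {false} else Finset.univ) := by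
    ext f
    simp only [Finset.mem_filter, Finset.mem_univ, true_and, Fintype.mem_piFinset]
    constructor
    · intro h i; by_cases hi : i ∈ S <;> simp [hi, h i]
    · intro h i hi; have := h i; simpa [hi] using this
  rw [h1, Fintype.card_piFinset]
  have h2 : ∀ i : Fin n, ((if i ∈ S then ({false} : Finset Bool) else Finset.univ)).card
      = if i ∈ S then 1 else 2 := by
    intro i; by_cases hi : i ∈ S <;> simp [hi]
  simp only [h2]
  rw [Finset.prod_ite, Finset.prod_const, Finset.prod_const]
  simp only [one_pow, one_mul]
  congr 1
  rw [Finset.filter_not, Finset.card_sdiff_of_subset (Finset.filter_subset _ _)]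
  congr 1
  · simp
  · rw [Finset.filter_mem_eq_inter, Finset.univ_inter]

lemma key (n k a b c d : ℕ)
    (ha : a + k ≤ n) (hb : b + k ≤ n) (hc : c + k ≤ n) (hd : d + k ≤ n)
    (hs : a + d < b + c) :
    Nat.card {ω : (Fin n → Bool) × (Fin n → Bool) //
      kmer k ω.1 a = kmer k ω.2 c ∧ kmer k ω.1 b = kmer k ω.2 d} ≤ 2 ^ (2*n - 2*k) := by
  classical
  set O : Finset ℕ := Finset.Ico c (c+k) ∩ Finset.Ico d (d+k) with hO
  set Tx : Finset ℕ := O.image (fun j => b + (j - d)) with hTx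
  set Ty : Finset ℕ := Finset.Ico c (c+k) ∪ Finset.Ico d (d+k) with hTy
  have hOmem : ∀ j ∈ O, c ≤ j ∧ j < c + k ∧ d ≤ j ∧ j < d + k := by
    intro j hj
    simp only [hO, Finset.mem_inter, Finset.mem_Ico] at hj
    omega
  -- the reconstruction lemma
  have recon : ∀ x y x' y' : Fin n → Bool,
      (kmer k x a = kmer k y c ∧ kmer k x b = kmer k y d) →
      (kmer k x' a = kmer k y' c ∧ kmer k x' b = kmer k y' d) →
      (∀ i : Fin n, (i : ℕ) ∉ Tx → x i = x' i) →
      (∀ i : Fin n, (i : ℕ) ∉ Ty → y i = y' i) →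
      x = x' ∧ y = y' := by
    intro x y x' y' hxy hxy' hoffx hoffy
    have e1 : ∀ t, t < k → get x (a + t) = get y (c + t) :=
      fun t ht => congrFun hxy.1 ⟨t, ht⟩
    have e2 : ∀ t, t < k → get x (b + t) = get y (d + t) :=
      fun t ht => congrFun hxy.2 ⟨t, ht⟩
    have e1' : ∀ t, t < k → get x' (a + t) = get y' (c + t) :=
      fun t ht => congrFun hxy'.1 ⟨t, ht⟩
    have e2' : ∀ t, t < k → get x' (b + t) = get y' (d + t) :=
      fun t ht => congrFun hxy'.2 ⟨t, ht⟩
    have hx : ∀ i : ℕ, get x i = get x' i := by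
      intro i
      induction i using Nat.strong_induction_on with
      | _ i IH =>
        by_cases hi : i < n
        · by_cases hmem : i ∈ Tx
          · obtain ⟨j, hjO, hji⟩ := Finset.mem_image.1 hmem
            obtain ⟨hjc, hjck, hjd, hjdk⟩ := hOmem j hjO
            have h1 : get x (a + (j - c)) = get y j := by
              have := e1 (j - c) (by omega)
              rwa [show c + (j - c) = j by omega] at this
            have h2 : get x (b + (j - d)) = get y j := by
              have := e2 (j - d) (by omega)
              rwa [show d + (j - d) = j by omega] at this
            have h1' : get x' (a + (j - c)) = get y' j := by
              have := e1' (j - c) (by omega)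
              rwa [show c + (j - c) = j by omega] at this
            have h2' : get x' (b + (j - d)) = get y' j := by
              have := e2' (j - d) (by omega)
              rwa [show d + (j - d) = j by omega] at this
            have hlt : a + (j - c) < i := by omega
            calc get x i = get x (b + (j - d)) := by rw [hji]
              _ = get x (a + (j - c)) := by rw [h1, h2]
              _ = get x' (a + (j - c)) := IH _ hlt
              _ = get x' (b + (j - d)) := by rw [h1', h2']
              _ = get x' i := by rw [hji]
          · have := hoffx ⟨i, hi⟩ hmem
            rw [get_pos x i hi, get_pos x' i hi]
            exact this
        · rw [get_neg x i hi, get_neg x' i hi]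
    have hy : ∀ j : ℕ, get y j = get y' j := by
      intro j
      by_cases hj : j < n
      · by_cases hmem : j ∈ Ty
        · rw [hTy, Finset.mem_union, Finset.mem_Ico, Finset.mem_Ico] at hmem
          rcases hmem with h | h
          · have t1 := e1 (j - c) (by omega)
            have t1' := e1' (j - c) (by omega)
            rw [show c + (j - c) = j by omega] at t1 t1'
            rw [← t1, ← t1', hx]
          · have t2 := e2 (j - d) (by omega)
            have t2' := e2' (j - d) (by omega)
            rw [show d + (j - d) = j by omega] at t2 t2'
            rw [← t2, ← t2', hx]
        · have := hoffy ⟨j, hj⟩ hmem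
          rw [get_pos y j hj, get_pos y' j hj]
          exact this
      · rw [get_neg y j hj, get_neg y' j hj]
    constructor
    · funext i
      have := hx i.val
      rwa [get_pos x _ i.isLt, get_pos x' _ i.isLt] at this
    · funext j
      have := hy j.val
      rwa [get_pos y _ j.isLt, get_pos y' _ j.isLt] at this
  -- counting part
  set Sx : Finset (Fin n) := Finset.univ.filter (fun i => (i : ℕ) ∈ Tx) with hSx
  set Sy : Finset (Fin n) := Finset.univ.filter (fun i => (i : ℕ) ∈ Ty) with hSy
  have hTx_lt : ∀ t ∈ Tx, t < n := by
    intro t ht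
    rw [hTx] at ht
    obtain ⟨j, hj, rfl⟩ := Finset.mem_image.1 ht
    have := hOmem j hj
    omega
  have hTy_lt : ∀ t ∈ Ty, t < n := by
    intro t ht
    rw [hTy, Finset.mem_union, Finset.mem_Ico, Finset.mem_Ico] at ht
    omega
  have cardpull : ∀ (T : Finset ℕ), (∀ t ∈ T, t < n) →
      (Finset.univ.filter (fun i : Fin n => (i : ℕ) ∈ T)).card = T.card := by
    intro T hT
    apply Finset.card_bij (fun (i : Fin n) _ => (i : ℕ))
    · intro i hi
      simpa using hi
    · intro i _ j _ h
      exact Fin.val_injective h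
    · intro t ht
      exact ⟨⟨t, hT t ht⟩, by simpa using ht, rfl⟩
  have hSxcard : Sx.card = O.card := by
    rw [hSx, cardpull _ hTx_lt, hTx]
    apply Finset.card_image_of_injOn
    intro j hj j' hj' h
    simp only at h
    have h1 := hOmem j hj
    have h2 := hOmem j' hj'
    omega
  have hSycard : Sy.card + Sx.card = 2 * k := by
    rw [hSy, cardpull _ hTy_lt, hSxcard, hTy, hO]
    have h1 := Finset.card_union_add_card_inter (Finset.Ico c (c+k)) (Finset.Ico d (d+k))
    rw [Nat.card_Ico, Nat.card_Ico] at h1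
    omega
  have hcard : (Finset.univ.filter fun ω : (Fin n → Bool) × (Fin n → Bool) =>
        kmer k ω.1 a = kmer k ω.2 c ∧ kmer k ω.1 b = kmer k ω.2 d).card
      ≤ ((Finset.univ.filter fun f : Fin n → Bool => ∀ i ∈ Sx, f i = false) ×ˢ
         (Finset.univ.filter fun g : Fin n → Bool => ∀ i ∈ Sy, g i = false)).card := by
    apply Finset.card_le_card_of_injOn
      (fun ω => (fun i => if i ∈ Sx then false else ω.1 i,
                 fun i => if i ∈ Sy then false else ω.2 i))
    · intro ω hω
      simp only [Finset.coe_product, Finset.coe_filter, Set.mem_prod, Finset.mem_coe, Finset.mem_product, Finset.mem_filter, Finset.mem_univ, true_and, Set.mem_setOf_eq]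
      exact ⟨fun i hi => by simp [hi], fun i hi => by simp [hi]⟩
    · intro ω hω ω' hω' h
      simp only [Finset.coe_filter, Finset.mem_univ, true_and, Set.mem_setOf_eq] at hω hω'
      have h1 := congrArg Prod.fst h
      have h2 := congrArg Prod.snd h
      simp only at h1 h2
      have hxoff : ∀ i : Fin n, (i : ℕ) ∉ Tx → ω.1 i = ω'.1 i := by
        intro i hi
        have hiS : i ∉ Sx := by simp [hSx, hi]
        have := congrFun h1 i
        simpa [if_neg hiS] using this
      have hyoff : ∀ i : Fin n, (i : ℕ) ∉ Ty → ω.2 i = ω'.2 i := by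
        intro i hi
        have hiS : i ∉ Sy := by simp [hSy, hi]
        have := congrFun h2 i
        simpa [if_neg hiS] using this
      obtain ⟨hx', hy'⟩ := recon ω.1 ω.2 ω'.1 ω'.2 hω hω' hxoff hyoff
      exact Prod.ext hx' hy'
  rw [Finset.card_product, count_fixed, count_fixed] at hcard
  have hSxn : Sx.card ≤ n := by
    simpa using Finset.card_le_univ Sx
  have hSyn : Sy.card ≤ n := by
    simpa using Finset.card_le_univ Sy
  have hexp : 2 ^ (n - Sx.card) * 2 ^ (n - Sy.card) = 2 ^ (2*n - 2*k) := by
    rw [← pow_add]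
    congr 1
    omega
  rw [hexp] at hcard
  rw [Nat.card_eq_fintype_card, Fintype.card_subtype]
  exact hcard

theorem double_match_prob_bound
    (n k : ℕ) (hk : 1 ≤ k) (hkn : k < n)
    (a b c d : ℕ)
    (ha : a + k ≤ n) (hb : b + k ≤ n) (hc : c + k ≤ n) (hd : d + k ≤ n)
    (hab : a < b) (hne : (d : ℤ) - (c : ℤ) ≠ (b : ℤ) - (a : ℤ)) :
    prob (fun xy : (Fin n → Bool) × (Fin n → Bool) =>
        kmer k xy.1 a = kmer k xy.2 c ∧ kmer k xy.1 b = kmer k xy.2 d) ≤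
      1 / 2 ^ (2 * k) := by
  classical
  have hcount : Nat.card {ω : (Fin n → Bool) × (Fin n → Bool) //
      kmer k ω.1 a = kmer k ω.2 c ∧ kmer k ω.1 b = kmer k ω.2 d} ≤ 2 ^ (2*n - 2*k) := by
    rcases (by omega : a + d < b + c ∨ b + c < a + d) with h | h
    · exact key n k a b c d ha hb hc hd h
    · calc Nat.card {ω : (Fin n → Bool) × (Fin n → Bool) //
            kmer k ω.1 a = kmer k ω.2 c ∧ kmer k ω.1 b = kmer k ω.2 d}
          = Nat.card {ω : (Fin n → Bool) × (Fin n → Bool) //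
            kmer k ω.1 b = kmer k ω.2 d ∧ kmer k ω.1 a = kmer k ω.2 c} :=
            Nat.card_congr (Equiv.subtypeEquivRight (fun ω => and_comm))
        _ ≤ 2 ^ (2*n - 2*k) := key n k b a d c hb ha hd hc h
  rw [prob]
  have hΩ : (Fintype.card ((Fin n → Bool) × (Fin n → Bool)) : ℝ) = 2 ^ (2*n) := by
    rw [Fintype.card_prod, Fintype.card_fun, Fintype.card_fin, Fintype.card_bool]
    push_cast
    rw [two_mul, pow_add]
  rw [hΩ, div_le_div_iff₀ (by positivity) (by positivity)]
  have hN : (Nat.card {ω : (Fin n → Bool) × (Fin n → Bool) //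
      kmer k ω.1 a = kmer k ω.2 c ∧ kmer k ω.1 b = kmer k ω.2 d} : ℝ) ≤ 2 ^ (2*n - 2*k) := by
    exact_mod_cast hcount
  have hmul : (2:ℝ) ^ (2*n - 2*k) * 2 ^ (2*k) = 2 ^ (2*n) := by
    rw [← pow_add]
    congr 1
    omega
  calc (Nat.card {ω : (Fin n → Bool) × (Fin n → Bool) //
          kmer k ω.1 a = kmer k ω.2 c ∧ kmer k ω.1 b = kmer k ω.2 d} : ℝ) * 2 ^ (2*k)
      ≤ (2:ℝ) ^ (2*n - 2*k) * 2 ^ (2*k) := by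
        apply mul_le_mul_of_nonneg_right hN
        positivity
    _ = 2 ^ (2*n) := hmul
    _ = 1 * 2 ^ (2*n) := by ring
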